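/- Let a and b be finite-state automorphisms of the regular rooted d-ary tree T, each having a finite orbit-signalizer. Then a and b are conjugate in the full automorphism group Aut(T) if and only if they are conjugate in the group FR(X) of functionally recursive automorphisms. -/

import Mathlib

open List

/-- Vertices of the rooted `d`-ary tree `T`: finite words over the alphabet
`X = Fin d`. -/
abbrev Vertex (d : ℕ) := List (Fin d)

/-- `g` is an automorphism of the rooted `d`-ary tree: a bijection of the
vertex set `X*` preserving word length and the prefix relation. -/
def IsTreeAut {d : ℕ} (g : Equiv.Perm (Vertex d)) : Prop :=
  (∀ v : Vertex d, (g v).length = v.length) ∧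
    ∀ v w : Vertex d, g v <+: g (v ++ w)

theorem IsTreeAut.prefix_mono {d : ℕ} {g : Equiv.Perm (Vertex d)} (hg : IsTreeAut g)
    {u u' : Vertex d} (h : u <+: u') : g u <+: g u' := by
  obtain ⟨t, rfl⟩ := h
  exact hg.2 u t

/-- The automorphism group `Aut(T)` of the rooted `d`-ary tree, as a subgroup
of the group of permutations of the vertex set. -/
def treeAut (d : ℕ) : Subgroup (Equiv.Perm (Vertex d)) where
  carrier := {g | IsTreeAut g}
  one_mem' := ⟨fun _ => rfl, fun v w => ⟨w, rfl⟩⟩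
  mul_mem' := by
    intro g h hg hh
    obtain ⟨hg1, hg2⟩ := hg
    obtain ⟨hh1, hh2⟩ := hh
    refine ⟨fun v => ?_, fun v w => ?_⟩
    · simp [Equiv.Perm.mul_apply, hg1, hh1]
    · obtain ⟨t, ht⟩ := hh2 v w
      simp only [Equiv.Perm.mul_apply]
      rw [← ht]
      exact hg2 (h v) t
  inv_mem' := by
    intro g hgmem
    obtain ⟨hg1, hg2⟩ := hgmem
    have hg : IsTreeAut g := ⟨hg1, hg2⟩
    have hlen' : ∀ v : Vertex d, (g⁻¹ v).length = v.length := by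
      intro v
      conv_rhs => rw [← (show g (g⁻¹ v) = v from g.apply_symm_apply v)]
      rw [hg1]
    refine ⟨hlen', fun v w => ?_⟩
    have hle : (g⁻¹ v).length ≤ (g⁻¹ (v ++ w)).length := by
      have h1 := hlen' v
      have h2 := hlen' (v ++ w)
      rw [List.length_append] at h2
      omega
    have htp : (g⁻¹ (v ++ w)).take (g⁻¹ v).length <+: g⁻¹ (v ++ w) :=
      List.take_prefix _ _
    have hgtp : g ((g⁻¹ (v ++ w)).take (g⁻¹ v).length) <+: v ++ w := by
      have := hg.prefix_mono htp
      rwa [(show ∀ x, g (g⁻¹ x) = x from g.apply_symm_apply)] at this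
    have hlen_tp : (g ((g⁻¹ (v ++ w)).take (g⁻¹ v).length)).length = v.length := by
      rw [hg1, List.length_take, min_eq_left hle, hlen' v]
    have hveq : g ((g⁻¹ (v ++ w)).take (g⁻¹ v).length) = v := by
      have h1 := List.prefix_iff_eq_take.mp hgtp
      have h2 := List.prefix_iff_eq_take.mp (List.prefix_append v w)
      rw [h1, hlen_tp]
      exact h2.symm
    have hkey : (g⁻¹ (v ++ w)).take (g⁻¹ v).length = g⁻¹ v := by
      apply g.injective
      rw [hveq, (show ∀ x, g (g⁻¹ x) = x from g.apply_symm_apply)]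
    rw [← hkey]
    exact htp

open scoped Classical in
/-- The state (section) `g|_v` of `g` at the vertex `v` : the unique
automorphism satisfying `g (v ++ w) = g v ++ (g|_v) w` for all `w`. -/
noncomputable def state {d : ℕ} (g : Equiv.Perm (Vertex d)) (v : Vertex d) :
    Equiv.Perm (Vertex d) :=
  if h : Function.Bijective (fun w : Vertex d => (g (v ++ w)).drop v.length) then
    Equiv.ofBijective _ h
  else 1

/-- A finite-state automorphism: one having finitely many states.  The
finite-state automorphisms form the group `F(X)`. -/
def FiniteState {d : ℕ} (g : Equiv.Perm (Vertex d)) : Prop :=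
  (Set.range fun v : Vertex d => state g v).Finite

/-- The cardinality of the orbit `Orb_a(v)` of the vertex `v` under the cyclic
group generated by `a`. -/
noncomputable def orbitCard {d : ℕ} (a : Equiv.Perm (Vertex d)) (v : Vertex d) : ℕ :=
  Nat.card (Set.range fun n : ℤ => (a ^ n) v)

/-- The orbit-signalizer `OS(a) = { a^m|_v : v ∈ X^*, m = |Orb_a(v)| }`. -/
noncomputable def OS {d : ℕ} (a : Equiv.Perm (Vertex d)) : Set (Equiv.Perm (Vertex d)) :=
  {s | ∃ v : Vertex d, s = state (a ^ orbitCard a v) v}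

/-- `a` has finite orbit-signalizer. -/
def FiniteOS {d : ℕ} (a : Equiv.Perm (Vertex d)) : Prop := (OS a).Finite

/-- A self-similar (state-closed) subgroup. -/
def SelfSimilar {d : ℕ} (G : Subgroup (Equiv.Perm (Vertex d))) : Prop :=
  ∀ g ∈ G, ∀ v : Vertex d, state g v ∈ G

/-- A contracting group: there is a finite set `N ⊆ G` such that every
`g ∈ G` has all its states in `N` from some level on. -/
def ContractingGroup {d : ℕ} (G : Subgroup (Equiv.Perm (Vertex d))) : Prop :=
  ∃ N : Set (Equiv.Perm (Vertex d)), N.Finite ∧ N ⊆ (G : Set (Equiv.Perm (Vertex d))) ∧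
    ∀ g ∈ G, ∃ n : ℕ, ∀ v : Vertex d, n ≤ v.length → state g v ∈ N

/-- A contracting automorphism: the self-similar group generated by all of its
states is contracting. -/
def ContractingAut {d : ℕ} (f : Equiv.Perm (Vertex d)) : Prop :=
  ContractingGroup (Subgroup.closure (Set.range fun v : Vertex d => state f v))

/-- The activity sequence `θ_k(g)`: the number of vertices `v` of level `k`
whose state `g|_v` acts nontrivially on the first level `X`. -/
noncomputable def theta {d : ℕ} (g : Equiv.Perm (Vertex d)) (k : ℕ) : ℕ :=
  Nat.card {v : Vertex d // v.length = k ∧ ∃ x : Fin d, state g v [x] ≠ [x]}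

/-- A bounded automorphism: a finite-state automorphism with bounded activity
sequence.  The bounded automorphisms form the group `Pol(0)`. -/
def BoundedAut {d : ℕ} (g : Equiv.Perm (Vertex d)) : Prop :=
  FiniteState g ∧ ∃ C : ℕ, ∀ k : ℕ, theta g k ≤ C

/-- A polynomial automorphism (an element of `Pol(∞)`): a finite-state
automorphism whose activity sequence is polynomially bounded. -/
def PolyAut {d : ℕ} (g : Equiv.Perm (Vertex d)) : Prop :=
  FiniteState g ∧ ∃ p : Polynomial ℕ, ∀ k : ℕ, theta g k ≤ p.eval k

/-- A finitary automorphism (an element of `Pol(-1)`): all states at some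
level are trivial. -/
def Finitary {d : ℕ} (g : Equiv.Perm (Vertex d)) : Prop :=
  ∃ k : ℕ, ∀ v : Vertex d, v.length = k → state g v = 1

/-- A functionally recursive automorphism: a member of some finitely generated
self-similar subgroup of `Aut(T)`.  These form the group `FR(X)`. -/
def FunctionallyRecursive {d : ℕ} (g : Equiv.Perm (Vertex d)) : Prop :=
  ∃ G : Subgroup (Equiv.Perm (Vertex d)), G ≤ treeAut d ∧ SelfSimilar G ∧
    (∃ S : Set (Equiv.Perm (Vertex d)), S.Finite ∧ G = Subgroup.closure S) ∧ g ∈ G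
theorem Equiv.Perm.apply_inv_self {α : Type*} (g : Equiv.Perm α) (x : α) : g (g⁻¹ x) = x :=
  g.apply_symm_apply x

theorem Equiv.Perm.inv_apply_self {α : Type*} (g : Equiv.Perm α) (x : α) : g⁻¹ (g x) = x :=
  g.symm_apply_apply x

section Basics
variable {d : ℕ}

theorem isTreeAut_iff_mem {g : Equiv.Perm (Vertex d)} : IsTreeAut g ↔ g ∈ treeAut d := Iff.rfl

theorem IsTreeAut.len {g : Equiv.Perm (Vertex d)} (hg : IsTreeAut g) (v : Vertex d) :
    (g v).length = v.length := hg.1 v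

theorem IsTreeAut.state_bij {g : Equiv.Perm (Vertex d)} (hg : IsTreeAut g) (v : Vertex d) :
    Function.Bijective (fun w : Vertex d => (g (v ++ w)).drop v.length) := by
  constructor
  · intro w w' h
    dsimp at h
    have h1 : g (v ++ w) = g v ++ (g (v ++ w)).drop v.length := by
      obtain ⟨t, ht⟩ := hg.2 v w
      rw [← ht]
      congr 1
      rw [← hg.len v, List.drop_left]
    have h2 : g (v ++ w') = g v ++ (g (v ++ w')).drop v.length := by
      obtain ⟨t, ht⟩ := hg.2 v w'
      rw [← ht]
      congr 1
      rw [← hg.len v, List.drop_left]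
    have : g (v ++ w) = g (v ++ w') := by rw [h1, h2, h]
    have := g.injective this
    exact List.append_cancel_left this
  · intro u
    have hginv : IsTreeAut (g⁻¹ : Equiv.Perm (Vertex d)) := (treeAut d).inv_mem hg
    have h1 : g⁻¹ (g v ++ u) = g⁻¹ (g v) ++ (g⁻¹ (g v ++ u)).drop (g v).length := by
      obtain ⟨t, ht⟩ := hginv.2 (g v) u
      rw [← ht]
      congr 1
      rw [← hginv.len (g v), List.drop_left]
    refine ⟨(g⁻¹ (g v ++ u)).drop (g v).length, ?_⟩
    dsimp
    rw [Equiv.Perm.inv_apply_self] at h1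
    rw [← Equiv.Perm.inv_def, ← h1, Equiv.Perm.apply_inv_self, ← hg.len v, List.drop_left]

theorem IsTreeAut.state_apply {g : Equiv.Perm (Vertex d)} (hg : IsTreeAut g) (v w : Vertex d) :
    state g v w = (g (v ++ w)).drop v.length := by
  rw [state, dif_pos (hg.state_bij v)]
  rfl

theorem IsTreeAut.apply_append {g : Equiv.Perm (Vertex d)} (hg : IsTreeAut g) (v w : Vertex d) :
    g (v ++ w) = g v ++ state g v w := by
  rw [hg.state_apply]
  obtain ⟨t, ht⟩ := hg.2 v w
  rw [← ht]
  congr 1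
  rw [← hg.len v, List.drop_left]

theorem IsTreeAut.state_isTreeAut {g : Equiv.Perm (Vertex d)} (hg : IsTreeAut g) (v : Vertex d) :
    IsTreeAut (state g v) := by
  constructor
  · intro w
    rw [hg.state_apply, List.length_drop, hg.len, List.length_append]
    omega
  · intro w w'
    rw [hg.state_apply, hg.state_apply, ← List.append_assoc]
    have h := hg.2 (v ++ w) w'
    obtain ⟨t, ht⟩ := h
    rw [← ht]
    have hlen : v.length ≤ (g (v ++ w)).length := by
      rw [hg.len, List.length_append]; omega
    rw [List.drop_append_of_le_length hlen]
    exact ⟨t, rfl⟩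

theorem state_one (v : Vertex d) : state (1 : Equiv.Perm (Vertex d)) v = 1 := by
  have h1 : IsTreeAut (1 : Equiv.Perm (Vertex d)) := (treeAut d).one_mem
  ext w
  rw [h1.state_apply]
  simp [List.drop_left]

theorem IsTreeAut.state_mul {g h : Equiv.Perm (Vertex d)} (hg : IsTreeAut g) (hh : IsTreeAut h)
    (v : Vertex d) : state (g * h) v = state g (h v) * state h v := by
  have hgh : IsTreeAut (g * h) := (treeAut d).mul_mem hg hh
  ext w
  rw [hgh.state_apply]
  simp only [Equiv.Perm.mul_apply]
  rw [hh.apply_append, hg.apply_append, ← hh.len v, ← hg.len (h v), List.drop_left]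

theorem IsTreeAut.state_inv {g : Equiv.Perm (Vertex d)} (hg : IsTreeAut g) (v : Vertex d) :
    state g⁻¹ v = (state g (g⁻¹ v))⁻¹ := by
  have hginv : IsTreeAut (g⁻¹ : Equiv.Perm (Vertex d)) := (treeAut d).inv_mem hg
  have := hg.state_mul hginv v
  rw [mul_inv_cancel, state_one] at this
  exact (inv_eq_of_mul_eq_one_right this.symm).symm

theorem IsTreeAut.state_nil {g : Equiv.Perm (Vertex d)} (hg : IsTreeAut g) :
    state g ([] : Vertex d) = g := by
  ext w
  rw [hg.state_apply]
  simp

theorem IsTreeAut.state_append {g : Equiv.Perm (Vertex d)} (hg : IsTreeAut g) (u v : Vertex d) :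
    state g (u ++ v) = state (state g u) v := by
  have hsu : IsTreeAut (state g u) := hg.state_isTreeAut u
  have huv : IsTreeAut (state g (u ++ v)) := hg.state_isTreeAut (u ++ v)
  ext w
  rw [hg.state_apply, hsu.state_apply, hg.state_apply, List.append_assoc,
    List.drop_drop, List.length_append]

theorem pow_apply_fix {g : Equiv.Perm (Vertex d)} {v : Vertex d} (hv : g v = v) (n : ℕ) :
    (g ^ n) v = v := by
  induction n with
  | zero => simp
  | succ k ih => rw [pow_succ, Equiv.Perm.mul_apply, hv, ih]

theorem IsTreeAut.pow {g : Equiv.Perm (Vertex d)} (hg : IsTreeAut g) (n : ℕ) :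
    IsTreeAut (g ^ n) := (treeAut d).pow_mem hg n

theorem IsTreeAut.state_pow {g : Equiv.Perm (Vertex d)} (hg : IsTreeAut g) {v : Vertex d}
    (hv : g v = v) (n : ℕ) : state (g ^ n) v = (state g v) ^ n := by
  induction n with
  | zero => rw [pow_zero, pow_zero, state_one]
  | succ k ih =>
    rw [pow_succ, pow_succ, (hg.pow k).state_mul hg v, hv, ih]

theorem IsTreeAut.letter {g : Equiv.Perm (Vertex d)} (hg : IsTreeAut g) (x : Fin d) :
    g [x] = [(g [x]).headD x] := by
  have : (g [x]).length = 1 := by rw [hg.len]; rfl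
  obtain ⟨y, hy⟩ := List.length_eq_one_iff.1 this
  rw [hy]; rfl

end Basics
section Orbits
variable {d : ℕ}

theorem finite_length_eq (n : ℕ) : {l : Vertex d | l.length = n}.Finite := by
  induction n with
  | zero =>
    refine Set.Finite.subset (Set.finite_singleton ([] : Vertex d)) ?_
    intro l hl
    simp only [Set.mem_setOf_eq, List.length_eq_zero_iff] at hl
    simp [hl]
  | succ k ih =>
    refine Set.Finite.subset (Set.Finite.image (fun p : Fin d × Vertex d => p.1 :: p.2)
      ((Set.finite_univ (α := Fin d)).prod ih)) ?_
    intro l hl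
    simp only [Set.mem_setOf_eq] at hl
    cases l with
    | nil => simp at hl
    | cons x t =>
      refine ⟨(x, t), ⟨Set.mem_univ x, ?_⟩, rfl⟩
      simpa using hl

theorem IsTreeAut.mem_periodicPts {g : Equiv.Perm (Vertex d)} (hg : IsTreeAut g)
    (v : Vertex d) : v ∈ Function.periodicPts g := by
  have hmaps : ∀ n : ℕ, (g ^ n) v ∈ {l : Vertex d | l.length = v.length} := by
    intro n
    exact (hg.pow n).len v
  have hfin := finite_length_eq (d := d) v.length
  have : ¬ Function.Injective (fun n : ℕ => (g ^ n) v) := by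
    intro hinj
    exact Set.infinite_of_injective_forall_mem hinj hmaps hfin
  rw [Function.not_injective_iff] at this
  obtain ⟨i, j, hij, hne⟩ := this
  rcases Nat.lt_or_ge i j with h | h
  · refine ⟨j - i, by omega, ?_⟩
    have : (g ^ (j - i)) ((g ^ i) v) = (g ^ i) v := by
      rw [← Equiv.Perm.mul_apply, ← pow_add]
      have : j - i + i = j := by omega
      rw [this, hij]
    have h2 : (g ^ i) ((g ^ (j - i)) v) = (g ^ i) v := by
      rw [← Equiv.Perm.mul_apply, ← pow_add, Nat.add_comm, pow_add, Equiv.Perm.mul_apply]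
      exact this
    have := (g ^ i).injective h2
    show (⇑g)^[j - i] v = v
    rw [Equiv.Perm.iterate_eq_pow]
    exact this
  · rcases Nat.lt_or_ge j i with h' | h'
    · refine ⟨i - j, by omega, ?_⟩
      have : (g ^ (i - j)) ((g ^ j) v) = (g ^ j) v := by
        rw [← Equiv.Perm.mul_apply, ← pow_add]
        have : i - j + j = i := by omega
        rw [this, hij.symm]
      have h2 : (g ^ j) ((g ^ (i - j)) v) = (g ^ j) v := by
        rw [← Equiv.Perm.mul_apply, ← pow_add, Nat.add_comm, pow_add, Equiv.Perm.mul_apply]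
        exact this
      have := (g ^ j).injective h2
      show (⇑g)^[i - j] v = v
      rw [Equiv.Perm.iterate_eq_pow]
      exact this
    · omega

theorem perm_zpow_fix {g : Equiv.Perm (Vertex d)} {v : Vertex d} (hv : g v = v) (n : ℤ) :
    (g ^ n) v = v := by
  have h1 : g ∈ MulAction.stabilizer (Equiv.Perm (Vertex d)) v := hv
  exact (MulAction.stabilizer (Equiv.Perm (Vertex d)) v).zpow_mem h1 n

theorem IsTreeAut.pow_minimalPeriod_fix {g : Equiv.Perm (Vertex d)} (hg : IsTreeAut g)
    (v : Vertex d) : (g ^ Function.minimalPeriod g v) v = v := by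
  have := Function.iterate_minimalPeriod (f := ⇑g) (x := v)
  rwa [Equiv.Perm.iterate_eq_pow] at this

theorem IsTreeAut.pow_fix_iff {g : Equiv.Perm (Vertex d)} (hg : IsTreeAut g)
    (v : Vertex d) (n : ℕ) : (g ^ n) v = v ↔ Function.minimalPeriod g v ∣ n := by
  rw [← Function.isPeriodicPt_iff_minimalPeriod_dvd]
  unfold Function.IsPeriodicPt Function.IsFixedPt
  rw [Equiv.Perm.iterate_eq_pow]

theorem IsTreeAut.minimalPeriod_pos {g : Equiv.Perm (Vertex d)} (hg : IsTreeAut g)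
    (v : Vertex d) : 0 < Function.minimalPeriod g v :=
  Function.minimalPeriod_pos_of_mem_periodicPts (hg.mem_periodicPts v)

theorem IsTreeAut.orbitCard_eq {g : Equiv.Perm (Vertex d)} (hg : IsTreeAut g) (v : Vertex d) :
    orbitCard g v = Function.minimalPeriod g v := by
  set m := Function.minimalPeriod g v with hm
  have hmpos : 0 < m := hg.minimalPeriod_pos v
  have hfix : (g ^ m) v = v := hg.pow_minimalPeriod_fix v
  have hrange : Set.range (fun n : ℤ => (g ^ n) v)
      = (fun k : ℕ => (g ^ k) v) '' ↑(Finset.range m) := by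
    ext u
    constructor
    · rintro ⟨n, rfl⟩
      have hkey : (g ^ n) v = (g ^ (n % (m : ℤ)).toNat) v := by
        have hsplit : n = n % (m : ℤ) + (m : ℤ) * (n / (m : ℤ)) := (Int.emod_add_mul_ediv n m).symm
        calc (g ^ n) v = (g ^ (n % (m : ℤ) + (m : ℤ) * (n / (m : ℤ)))) v := by rw [← hsplit]
          _ = (g ^ (n % (m : ℤ))) ((g ^ ((m : ℤ) * (n / (m : ℤ)))) v) := by
              rw [zpow_add, Equiv.Perm.mul_apply]
          _ = (g ^ (n % (m : ℤ))) v := by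
              have hq : ((g ^ (m : ℤ)) ^ (n / (m : ℤ))) v = v :=
                perm_zpow_fix (by rw [zpow_natCast]; exact hfix) _
              rw [zpow_mul, hq]
          _ = (g ^ (n % (m : ℤ)).toNat) v := by
              have hnn : (((n % (m : ℤ)).toNat : ℤ)) = n % (m : ℤ) :=
                Int.toNat_of_nonneg (Int.emod_nonneg n (by exact_mod_cast hmpos.ne'))
              conv_lhs => rw [← hnn]
              rw [zpow_natCast]
      refine ⟨(n % (m : ℤ)).toNat, ?_, hkey.symm⟩
      simp only [Finset.coe_range, Set.mem_Iio]
      have h1 : n % (m : ℤ) < m := Int.emod_lt_of_pos n (by exact_mod_cast hmpos)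
      omega
    · rintro ⟨k, _, rfl⟩
      exact ⟨(k : ℤ), by show (g ^ (k : ℤ)) v = (g ^ k) v; rw [zpow_natCast]⟩
  have hinj : Set.InjOn (fun k : ℕ => (g ^ k) v) ↑(Finset.range m) := by
    intro i hi j hj hij
    have := Function.iterate_injOn_Iio_minimalPeriod (f := ⇑g) (x := v)
    simp only [Finset.coe_range] at hi hj
    exact this hi hj (by simpa [Equiv.Perm.iterate_eq_pow] using hij)
  rw [orbitCard, hrange, Nat.card_coe_set_eq, Set.ncard_image_of_injOn hinj,
    Set.ncard_coe_finset, Finset.card_range]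

theorem IsTreeAut.pow_orbitCard_fix {g : Equiv.Perm (Vertex d)} (hg : IsTreeAut g)
    (v : Vertex d) : (g ^ orbitCard g v) v = v := by
  rw [hg.orbitCard_eq]; exact hg.pow_minimalPeriod_fix v

theorem IsTreeAut.orbitCard_pos {g : Equiv.Perm (Vertex d)} (hg : IsTreeAut g)
    (v : Vertex d) : 0 < orbitCard g v := by
  rw [hg.orbitCard_eq]; exact hg.minimalPeriod_pos v

theorem IsTreeAut.pow_fix_iff_orbitCard {g : Equiv.Perm (Vertex d)} (hg : IsTreeAut g)
    (v : Vertex d) (n : ℕ) : (g ^ n) v = v ↔ orbitCard g v ∣ n := by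
  rw [hg.orbitCard_eq]; exact hg.pow_fix_iff v n

end Orbits
noncomputable section Letters
open scoped Classical
variable {d : ℕ}

/-- The set of letters in the `p`-orbit of `x` (acting on length-1 words). -/
def relSet (p : Equiv.Perm (Vertex d)) (x : Fin d) : Finset (Fin d) :=
  Finset.univ.filter fun y => ∃ n : ℕ, (p ^ n) [y] = [x]

theorem mem_relSet {p : Equiv.Perm (Vertex d)} {x y : Fin d} :
    y ∈ relSet p x ↔ ∃ n : ℕ, (p ^ n) [y] = [x] := by
  simp [relSet]

theorem self_mem_relSet (p : Equiv.Perm (Vertex d)) (x : Fin d) : x ∈ relSet p x :=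
  mem_relSet.2 ⟨0, by simp⟩

theorem rel_symm {p : Equiv.Perm (Vertex d)} (hp : IsTreeAut p) {x y : Fin d}
    (h : ∃ n : ℕ, (p ^ n) [y] = [x]) : ∃ k : ℕ, (p ^ k) [x] = [y] := by
  obtain ⟨n, hn⟩ := h
  set m := orbitCard p ([y] : Vertex d) with hm
  have hmpos : 0 < m := hp.orbitCard_pos [y]
  refine ⟨m * n - n, ?_⟩
  rw [← hn, ← Equiv.Perm.mul_apply, ← pow_add]
  have he : m * n - n + n = m * n := by
    have : n ≤ m * n := Nat.le_mul_of_pos_left n hmpos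
    omega
  rw [he]
  exact (hp.pow_fix_iff_orbitCard [y] (m * n)).2 ⟨n, rfl⟩

theorem relSet_eq {p : Equiv.Perm (Vertex d)} (hp : IsTreeAut p) {x y : Fin d}
    (hyx : y ∈ relSet p x) : relSet p y = relSet p x := by
  obtain ⟨n, hn⟩ := mem_relSet.1 hyx
  ext z
  simp only [mem_relSet]
  constructor
  · rintro ⟨k, hk⟩
    exact ⟨n + k, by rw [pow_add, Equiv.Perm.mul_apply, hk, hn]⟩
  · rintro ⟨k, hk⟩
    obtain ⟨j, hj⟩ := rel_symm hp ⟨n, hn⟩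
    exact ⟨j + k, by rw [pow_add, Equiv.Perm.mul_apply, hk, hj]⟩

/-- The canonical representative of the `p`-orbit of the letter `x`. -/
def orbRep (p : Equiv.Perm (Vertex d)) (x : Fin d) : Fin d :=
  (relSet p x).min' ⟨x, self_mem_relSet p x⟩

theorem orbRep_mem (p : Equiv.Perm (Vertex d)) (x : Fin d) : orbRep p x ∈ relSet p x :=
  Finset.min'_mem _ _

theorem orbRep_exists (p : Equiv.Perm (Vertex d)) (x : Fin d) :
    ∃ n : ℕ, (p ^ n) [orbRep p x] = [x] :=
  mem_relSet.1 (orbRep_mem p x)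

theorem orbRep_eq {p : Equiv.Perm (Vertex d)} (hp : IsTreeAut p) {x y : Fin d}
    (hyx : y ∈ relSet p x) : orbRep p y = orbRep p x := by
  unfold orbRep
  congr 1
  exact relSet_eq hp hyx

theorem orbRep_idem {p : Equiv.Perm (Vertex d)} (hp : IsTreeAut p) (x : Fin d) :
    orbRep p (orbRep p x) = orbRep p x :=
  orbRep_eq hp (orbRep_mem p x)

/-- The position of the letter `x` within its `p`-orbit. -/
def stepJ (p : Equiv.Perm (Vertex d)) (x : Fin d) : ℕ :=
  Nat.find (orbRep_exists p x)

theorem pow_stepJ (p : Equiv.Perm (Vertex d)) (x : Fin d) :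
    (p ^ stepJ p x) [orbRep p x] = [x] :=
  Nat.find_spec (orbRep_exists p x)

theorem stepJ_lt {p : Equiv.Perm (Vertex d)} (hp : IsTreeAut p) (x : Fin d) :
    stepJ p x < orbitCard p ([orbRep p x] : Vertex d) := by
  obtain ⟨n, hn⟩ := orbRep_exists p x
  set m := orbitCard p ([orbRep p x] : Vertex d) with hm
  have hmpos : 0 < m := hp.orbitCard_pos _
  have hmod : (p ^ (n % m)) [orbRep p x] = [x] := by
    conv_rhs => rw [← hn]
    conv_rhs => rw [show n = n % m + m * (n / m) from by rw [Nat.add_comm, Nat.div_add_mod]]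
    rw [pow_add, Equiv.Perm.mul_apply,
      (hp.pow_fix_iff_orbitCard _ (m * (n / m))).2 ⟨n / m, rfl⟩]
  calc stepJ p x ≤ n % m := Nat.find_min' _ hmod
    _ < m := Nat.mod_lt n hmpos

theorem stepJ_eq {p : Equiv.Perm (Vertex d)} (hp : IsTreeAut p) {x : Fin d} {i : ℕ}
    (hi : i < orbitCard p ([orbRep p x] : Vertex d)) (hix : (p ^ i) [orbRep p x] = [x]) :
    stepJ p x = i := by
  have hj : stepJ p x ≤ i := Nat.find_min' _ hix
  have hlt := stepJ_lt hp x
  have heq : (p ^ i) [orbRep p x] = (p ^ stepJ p x) [orbRep p x] := by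
    rw [hix, pow_stepJ]
  have hfix : (p ^ (i - stepJ p x)) ([orbRep p x] : Vertex d) = [orbRep p x] := by
    have h2 : (p ^ stepJ p x) ((p ^ (i - stepJ p x)) [orbRep p x])
        = (p ^ stepJ p x) [orbRep p x] := by
      rw [← Equiv.Perm.mul_apply, ← pow_add]
      have : stepJ p x + (i - stepJ p x) = i := by omega
      rw [this, heq]
    exact (p ^ stepJ p x).injective h2
  have hdvd := (hp.pow_fix_iff_orbitCard _ _).1 hfix
  have : i - stepJ p x < orbitCard p ([orbRep p x] : Vertex d) := by omega
  have : i - stepJ p x = 0 := Nat.eq_zero_of_dvd_of_lt hdvd this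
  omega

theorem stepJ_orbRep {p : Equiv.Perm (Vertex d)} (hp : IsTreeAut p) (x : Fin d) :
    stepJ p (orbRep p x) = 0 := by
  rw [stepJ, Nat.find_eq_zero]
  rw [pow_zero, orbRep_idem hp]
  rfl

/-- A chosen conjugator from `p` to `q` in `Aut(T)` (or `1` if none exists). -/
def conjc (p q : Equiv.Perm (Vertex d)) : Equiv.Perm (Vertex d) :=
  if h : ∃ h : Equiv.Perm (Vertex d), IsTreeAut h ∧ h * p * h⁻¹ = q then h.choose else 1

theorem conjc_spec {p q : Equiv.Perm (Vertex d)}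
    (h : ∃ h : Equiv.Perm (Vertex d), IsTreeAut h ∧ h * p * h⁻¹ = q) :
    IsTreeAut (conjc p q) ∧ conjc p q * p * (conjc p q)⁻¹ = q := by
  rw [conjc, dif_pos h]
  exact h.choose_spec

theorem conj_pow_apply {p q h : Equiv.Perm (Vertex d)} (hc : h * p * h⁻¹ = q) (n : ℕ)
    (v : Vertex d) : (q ^ n) (h v) = h ((p ^ n) v) := by
  have : q ^ n = h * p ^ n * h⁻¹ := by rw [← hc, conj_pow]
  rw [this]
  simp [Equiv.Perm.mul_apply]

end Letters
section OSStep
variable {d : ℕ}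

theorem os_step {a : Equiv.Perm (Vertex d)} (ha : IsTreeAut a) (v : Vertex d) (x0 : Fin d) :
    orbitCard a (v ++ [x0]) =
      orbitCard a v * orbitCard (state (a ^ orbitCard a v) v) ([x0] : Vertex d) ∧
    state ((state (a ^ orbitCard a v) v) ^
        orbitCard (state (a ^ orbitCard a v) v) ([x0] : Vertex d)) [x0]
      = state (a ^ orbitCard a (v ++ [x0])) (v ++ [x0]) := by
  set M := orbitCard a v with hM
  set p := state (a ^ M) v with hpdef
  set m := orbitCard p ([x0] : Vertex d) with hm
  have hMpos : 0 < M := ha.orbitCard_pos v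
  have hfix : (a ^ M) v = v := ha.pow_orbitCard_fix v
  have hp : IsTreeAut p := (ha.pow M).state_isTreeAut v
  have hmpos : 0 < m := hp.orbitCard_pos _
  have hstate : ∀ j : ℕ, state (a ^ (M * j)) v = p ^ j := by
    intro j
    rw [pow_mul, (ha.pow M).state_pow hfix]
  have key : ∀ k : ℕ, (a ^ k) (v ++ [x0]) = v ++ [x0] ↔ M * m ∣ k := by
    intro k
    rw [(ha.pow k).apply_append]
    constructor
    · intro hk
      have hlen : ((a ^ k) v).length = v.length := (ha.pow k).len v
      obtain ⟨h1, h2⟩ := List.append_inj hk hlen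
      have hMk : M ∣ k := (ha.pow_fix_iff_orbitCard v k).1 h1
      obtain ⟨j, rfl⟩ := hMk
      rw [hstate j] at h2
      have hmj : m ∣ j := (hp.pow_fix_iff_orbitCard _ j).1 h2
      exact mul_dvd_mul_left M hmj
    · rintro ⟨t, rfl⟩
      have h1 : (a ^ (M * m * t)) v = v :=
        (ha.pow_fix_iff_orbitCard v _).2 ⟨m * t, by ring⟩
      have h2 : state (a ^ (M * m * t)) v ([x0] : Vertex d) = [x0] := by
        rw [show M * m * t = M * (m * t) by ring, hstate]
        exact (hp.pow_fix_iff_orbitCard _ _).2 ⟨t, rfl⟩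
      rw [h1, h2]
  have hcard : orbitCard a (v ++ [x0]) = M * m := by
    apply Nat.dvd_antisymm
    · exact (ha.pow_fix_iff_orbitCard _ _).1 ((key (M * m)).2 dvd_rfl)
    · exact (key _).1 (ha.pow_orbitCard_fix (v ++ [x0]))
  refine ⟨hcard, ?_⟩
  rw [hcard, (ha.pow (M * m)).state_append, hstate m]

/-- The invariant maintained along the recursive construction of the conjugator:
`p` and `q` are in the orbit-signalizers of `a` and `b` respectively, and they
are conjugate in `Aut(T)`. -/
def Good {d : ℕ} (a b p q : Equiv.Perm (Vertex d)) : Prop :=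
  (∃ v : Vertex d, p = state (a ^ orbitCard a v) v) ∧
  (∃ u : Vertex d, q = state (b ^ orbitCard b u) u) ∧
  ∃ h : Equiv.Perm (Vertex d), IsTreeAut h ∧ h * p * h⁻¹ = q

theorem Good.treeAut_left {a b p q : Equiv.Perm (Vertex d)} (ha : IsTreeAut a)
    (hG : Good a b p q) : IsTreeAut p := by
  obtain ⟨⟨v, rfl⟩, -, -⟩ := hG
  exact (ha.pow _).state_isTreeAut v

theorem Good.treeAut_right {a b p q : Equiv.Perm (Vertex d)} (hb : IsTreeAut b)
    (hG : Good a b p q) : IsTreeAut q := by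
  obtain ⟨-, ⟨u, rfl⟩, -⟩ := hG
  exact (hb.pow _).state_isTreeAut u

/-- The letter matched to the orbit representative `orbRep p x` by the chosen
conjugator from `p` to `q`. -/
noncomputable def KY (p q : Equiv.Perm (Vertex d)) (x : Fin d) : Fin d :=
  ((conjc p q) [orbRep p x]).headD (orbRep p x)

/-- First-level orbit-signalizer successor on the domain side. -/
noncomputable def Kp (p : Equiv.Perm (Vertex d)) (x : Fin d) : Equiv.Perm (Vertex d) :=
  state (p ^ orbitCard p ([orbRep p x] : Vertex d)) [orbRep p x]

/-- First-level orbit-signalizer successor on the range side. -/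
noncomputable def Kq (p q : Equiv.Perm (Vertex d)) (x : Fin d) : Equiv.Perm (Vertex d) :=
  state (q ^ orbitCard p ([orbRep p x] : Vertex d)) [KY p q x]

/-- Twisting state on the domain side. -/
noncomputable def KT (p : Equiv.Perm (Vertex d)) (x : Fin d) : Equiv.Perm (Vertex d) :=
  state (p ^ stepJ p x) [orbRep p x]

/-- Twisting state on the range side. -/
noncomputable def KS (p q : Equiv.Perm (Vertex d)) (x : Fin d) : Equiv.Perm (Vertex d) :=
  state (q ^ stepJ p x) [KY p q x]

/-- First letter (as a word) of the image. -/
noncomputable def KA (p q : Equiv.Perm (Vertex d)) (x : Fin d) : Vertex d :=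
  (q ^ stepJ p x) [KY p q x]

theorem good_step {a b p q : Equiv.Perm (Vertex d)} (ha : IsTreeAut a) (hb : IsTreeAut b)
    (hG : Good a b p q) (x : Fin d) :
    Good a b (Kp p x) (Kq p q x) ∧
    orbitCard q ([KY p q x] : Vertex d) = orbitCard p ([orbRep p x] : Vertex d) ∧
    (conjc p q) [orbRep p x] = [KY p q x] ∧
    state (conjc p q) [orbRep p x] * Kp p x * (state (conjc p q) [orbRep p x])⁻¹
      = Kq p q x := by
  obtain ⟨hcj, hcc⟩ := conjc_spec hG.2.2
  have hp : IsTreeAut p := hG.treeAut_left ha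
  have hq : IsTreeAut q := hG.treeAut_right hb
  set h := conjc p q with hh
  set x0 := orbRep p x with hx0
  set y0 := KY p q x with hy0
  set m := orbitCard p ([x0] : Vertex d) with hm
  have hletter : h [x0] = [y0] := hcj.letter x0
  have horb : orbitCard q ([y0] : Vertex d) = m := by
    have hiff : ∀ k : ℕ, (q ^ k) ([y0] : Vertex d) = [y0] ↔ (p ^ k) ([x0] : Vertex d) = [x0] := by
      intro k
      rw [← hletter, conj_pow_apply hcc]
      exact ⟨fun hk => h.injective hk, fun hk => by rw [hk]⟩
    apply Nat.dvd_antisymm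
    · exact (hq.pow_fix_iff_orbitCard _ _).1 ((hiff m).2 (hp.pow_orbitCard_fix _))
    · exact (hp.pow_fix_iff_orbitCard _ _).1 ((hiff _).1 (hq.pow_orbitCard_fix _))
  have hfixm : (p ^ m) ([x0] : Vertex d) = [x0] := hp.pow_orbitCard_fix _
  have hconj : state h [x0] * Kp p x * (state h [x0])⁻¹ = Kq p q x := by
    have hpm : h * p ^ m * h⁻¹ = q ^ m := by rw [← hcc, conj_pow]
    have hmul : h * p ^ m = q ^ m * h := by
      rw [← hpm]; group
    have := congrArg (fun g => state g ([x0] : Vertex d)) hmul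
    rw [hcj.state_mul (hp.pow m) _, (hq.pow m).state_mul hcj _, hfixm, hletter] at this
    have hKp : state (p ^ m) ([x0] : Vertex d) = Kp p x := rfl
    have hKq : state (q ^ m) ([y0] : Vertex d) = Kq p q x := rfl
    rw [hKp, hKq] at this
    rw [this]
    group
  refine ⟨⟨?_, ?_, ⟨state h [x0], hcj.state_isTreeAut [x0], hconj⟩⟩, horb, hletter, hconj⟩
  · obtain ⟨v, hv⟩ := hG.1
    refine ⟨v ++ [x0], ?_⟩
    have := (os_step ha v x0).2
    rw [← hv] at this
    rw [Kp, ← hx0, ← hm, this]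
  · obtain ⟨u, hu⟩ := hG.2.1
    refine ⟨u ++ [y0], ?_⟩
    have := (os_step hb u y0).2
    rw [← hu] at this
    rw [Kq, ← hx0, ← hm, ← horb, this]

end OSStep
noncomputable section KDef
variable {d : ℕ}

/-- Fueled version of the recursively defined conjugator. -/
def Kaux : ℕ → Equiv.Perm (Vertex d) → Equiv.Perm (Vertex d) → Vertex d → Vertex d
  | 0, _, _, _ => []
  | n + 1, p, q, v =>
    match v with
    | [] => []
    | x :: w => KA p q x ++ (KS p q x) (Kaux n (Kp p x) (Kq p q x) ((KT p x)⁻¹ w))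

/-- The recursively defined conjugator associated to the pair `(p, q)`. -/
def Kfun (p q : Equiv.Perm (Vertex d)) (v : Vertex d) : Vertex d :=
  Kaux v.length p q v

theorem Kaux_succ_cons (n : ℕ) (p q : Equiv.Perm (Vertex d)) (x : Fin d) (w : Vertex d) :
    Kaux (n + 1) p q (x :: w)
      = KA p q x ++ (KS p q x) (Kaux n (Kp p x) (Kq p q x) ((KT p x)⁻¹ w)) := rfl

theorem Kfun_nil (p q : Equiv.Perm (Vertex d)) : Kfun p q [] = [] := rfl

theorem KT_treeAut {p : Equiv.Perm (Vertex d)} (hp : IsTreeAut p) (x : Fin d) :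
    IsTreeAut (KT p x) := (hp.pow _).state_isTreeAut _

theorem KT_inv_treeAut {p : Equiv.Perm (Vertex d)} (hp : IsTreeAut p) (x : Fin d) :
    IsTreeAut ((KT p x)⁻¹) := (treeAut d).inv_mem (KT_treeAut hp x)

theorem KS_treeAut {q : Equiv.Perm (Vertex d)} (hq : IsTreeAut q)
    (p : Equiv.Perm (Vertex d)) (x : Fin d) : IsTreeAut (KS p q x) :=
  (hq.pow _).state_isTreeAut _

theorem KA_length {q : Equiv.Perm (Vertex d)} (hq : IsTreeAut q)
    (p : Equiv.Perm (Vertex d)) (x : Fin d) : (KA p q x).length = 1 := by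
  rw [KA, (hq.pow _).len]
  rfl

theorem orbRep_headD {p : Equiv.Perm (Vertex d)} (hp : IsTreeAut p) (x : Fin d) :
    orbRep p ((p [x]).headD x) = orbRep p x := by
  have hx' : p [x] = [(p [x]).headD x] := hp.letter x
  have hmem : orbRep p x ∈ relSet p ((p [x]).headD x) := by
    rw [mem_relSet]
    refine ⟨stepJ p x + 1, ?_⟩
    rw [pow_succ', Equiv.Perm.mul_apply, pow_stepJ, ← hx']
  have h1 : orbRep p (orbRep p x) = orbRep p ((p [x]).headD x) := orbRep_eq hp hmem
  rw [orbRep_idem hp x] at h1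
  exact h1.symm

theorem state_pow_succ_letter {p : Equiv.Perm (Vertex d)} (hp : IsTreeAut p) (x : Fin d) :
    state (p ^ (stepJ p x + 1)) [orbRep p x] = state p [x] * KT p x := by
  rw [pow_succ', hp.state_mul (hp.pow (stepJ p x)), pow_stepJ, KT]

theorem pow_inj_orbit {q : Equiv.Perm (Vertex d)} (hq : IsTreeAut q) {y : Vertex d} {i k : ℕ}
    (hi : i < orbitCard q y) (hk : k < orbitCard q y) (h : (q ^ i) y = (q ^ k) y) : i = k := by
  rcases le_total i k with hle | hle
  · have h1 : (q ^ i) ((q ^ (k - i)) y) = (q ^ i) y := by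
      rw [← Equiv.Perm.mul_apply, ← pow_add]
      have : i + (k - i) = k := by omega
      rw [this, ← h]
    have h2 := (q ^ i).injective h1
    have := Nat.eq_zero_of_dvd_of_lt ((hq.pow_fix_iff_orbitCard y _).1 h2) (by omega)
    omega
  · have h1 : (q ^ k) ((q ^ (i - k)) y) = (q ^ k) y := by
      rw [← Equiv.Perm.mul_apply, ← pow_add]
      have : k + (i - k) = i := by omega
      rw [this, h]
    have h2 := (q ^ k).injective h1
    have := Nat.eq_zero_of_dvd_of_lt ((hq.pow_fix_iff_orbitCard y _).1 h2) (by omega)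
    omega

variable {a b : Equiv.Perm (Vertex d)}

theorem Kaux_eq (ha : IsTreeAut a) (hb : IsTreeAut b) :
    ∀ n (p q : Equiv.Perm (Vertex d)), Good a b p q → ∀ v : Vertex d, v.length ≤ n →
      Kaux n p q v = Kfun p q v := by
  intro n
  induction n with
  | zero =>
    intro p q hG v hv
    have : v = [] := List.length_eq_zero_iff.1 (by omega)
    subst this
    rfl
  | succ n ih =>
    intro p q hG v hv
    cases v with
    | nil => rfl
    | cons x w =>
      have hp : IsTreeAut p := hG.treeAut_left ha
      have hG' := (good_step ha hb hG x).1
      have hu : ((KT p x)⁻¹ w).length = w.length := (KT_inv_treeAut hp x).len w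
      rw [Kfun, List.length_cons, Kaux_succ_cons, Kaux_succ_cons]
      congr 2
      rw [ih _ _ hG' _ (by rw [hu]; simpa using hv), Kfun, hu]

theorem Kfun_cons (ha : IsTreeAut a) (hb : IsTreeAut b) {p q : Equiv.Perm (Vertex d)}
    (hG : Good a b p q) (x : Fin d) (w : Vertex d) :
    Kfun p q (x :: w)
      = KA p q x ++ (KS p q x) (Kfun (Kp p x) (Kq p q x) ((KT p x)⁻¹ w)) := by
  have hp : IsTreeAut p := hG.treeAut_left ha
  have hG' := (good_step ha hb hG x).1
  have hu : ((KT p x)⁻¹ w).length = w.length := (KT_inv_treeAut hp x).len w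
  rw [Kfun, List.length_cons, Kaux_succ_cons]
  congr 2
  rw [Kaux_eq ha hb _ _ _ hG' _ (le_of_eq hu)]

theorem Kfun_length (ha : IsTreeAut a) (hb : IsTreeAut b) :
    ∀ n (p q : Equiv.Perm (Vertex d)), Good a b p q → ∀ v : Vertex d, v.length = n →
      (Kfun p q v).length = n := by
  intro n
  induction n using Nat.strong_induction_on with
  | _ n ih =>
    intro p q hG v hv
    cases v with
    | nil => rw [Kfun_nil]; exact hv
    | cons x w =>
      have hp : IsTreeAut p := hG.treeAut_left ha
      have hq : IsTreeAut q := hG.treeAut_right hb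
      have hG' := (good_step ha hb hG x).1
      have hu : ((KT p x)⁻¹ w).length = w.length := (KT_inv_treeAut hp x).len w
      have hn : w.length + 1 = n := by simpa using hv
      rw [Kfun_cons ha hb hG, List.length_append, KA_length hq,
        (KS_treeAut hq p x).len, ih w.length (by omega) _ _ hG' _ hu]
      omega

end KDef
section KConj
variable {d : ℕ} {a b : Equiv.Perm (Vertex d)}

theorem Kfun_conj (ha : IsTreeAut a) (hb : IsTreeAut b) :
    ∀ n (p q : Equiv.Perm (Vertex d)), Good a b p q → ∀ v : Vertex d, v.length = n →
      Kfun p q (p v) = q (Kfun p q v) := by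
  intro n
  induction n using Nat.strong_induction_on with
  | _ n ih =>
    intro p q hG v hv
    have hp : IsTreeAut p := hG.treeAut_left ha
    have hq : IsTreeAut q := hG.treeAut_right hb
    cases v with
    | nil =>
      have h1 : p ([] : Vertex d) = [] := List.length_eq_zero_iff.1 (by rw [hp.len]; rfl)
      have h2 : q ([] : Vertex d) = [] := List.length_eq_zero_iff.1 (by rw [hq.len]; rfl)
      rw [h1, Kfun_nil, h2]
    | cons x w =>
      obtain ⟨hG', horb, hletter, hconj⟩ := good_step ha hb hG x
      have hn : w.length + 1 = n := by simpa using hv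
      have hx : (p ^ stepJ p x) ([orbRep p x] : Vertex d) = [x] := pow_stepJ p x
      have hpx : p [x] = [(p [x]).headD x] := hp.letter x
      set x' := (p [x]).headD x with hx'def
      have hsplit : p (x :: w) = x' :: (state p [x]) w := by
        have hxx : (x :: w : Vertex d) = [x] ++ w := rfl
        rw [hxx, hp.apply_append, hpx]
        rfl
      have hrep' : orbRep p x' = orbRep p x := orbRep_headD hp x
      have hjlt : stepJ p x < orbitCard p ([orbRep p x] : Vertex d) := stepJ_lt hp x
      have hstep' : (p ^ (stepJ p x + 1)) ([orbRep p x] : Vertex d) = [x'] := by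
        rw [pow_succ', Equiv.Perm.mul_apply, hx, ← hpx]
      have hKY' : KY p q x' = KY p q x := by rw [KY, KY, hrep']
      have hKp' : Kp p x' = Kp p x := by rw [Kp, Kp, hrep']
      have hKq' : Kq p q x' = Kq p q x := by rw [Kq, Kq, hrep', hKY']
      have hqm : (q ^ orbitCard p ([orbRep p x] : Vertex d)) ([KY p q x] : Vertex d)
          = [KY p q x] := by
        have := hq.pow_orbitCard_fix ([KY p q x] : Vertex d)
        rwa [horb] at this
      rcases Nat.lt_or_ge (stepJ p x + 1) (orbitCard p ([orbRep p x] : Vertex d))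
        with hlt | hge
      · -- no wrap-around
        have hj' : stepJ p x' = stepJ p x + 1 :=
          stepJ_eq hp (by rwa [hrep']) (by rwa [hrep'])
        have hKT' : KT p x' = state p [x] * KT p x := by
          rw [KT, hj', hrep', state_pow_succ_letter hp x]
        have hKA' : KA p q x' = q ((q ^ stepJ p x) [KY p q x]) := by
          rw [KA, hj', hKY', pow_succ', Equiv.Perm.mul_apply]
        have hKS' : KS p q x' = state q ((q ^ stepJ p x) [KY p q x]) * KS p q x := by
          rw [KS, KS, hj', hKY', pow_succ', hq.state_mul (hq.pow (stepJ p x))]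
        rw [hsplit, Kfun_cons ha hb hG x' ((state p [x]) w), Kfun_cons ha hb hG x w,
          hKp', hKq', hKT', hKA', hKS']
        have harg : ((state p [x] * KT p x)⁻¹) ((state p [x]) w) = (KT p x)⁻¹ w := by
          simp [mul_inv_rev, Equiv.Perm.mul_apply]
        rw [harg, hq.apply_append]
        rfl
      · -- wrap-around
        have hjeq : stepJ p x + 1 = orbitCard p ([orbRep p x] : Vertex d) := by omega
        have hxm : (p ^ orbitCard p ([orbRep p x] : Vertex d)) ([orbRep p x] : Vertex d)
            = [orbRep p x] := hp.pow_orbitCard_fix _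
        have hx'eq : x' = orbRep p x := by
          have h1 : ([x'] : Vertex d) = [orbRep p x] := by
            rw [← hstep', hjeq, hxm]
          exact List.head_eq_of_cons_eq h1
        have hj' : stepJ p x' = 0 := by
          rw [hx'eq]
          exact stepJ_orbRep hp x
        have hKT' : KT p x' = 1 := by
          rw [KT, hj', pow_zero, state_one]
        have hKA' : KA p q x' = [KY p q x] := by
          rw [KA, hj', hKY', pow_zero]
          rfl
        have hKS' : KS p q x' = 1 := by
          rw [KS, hj', hKY', pow_zero, state_one]
        have hstatepx : state p [x] = Kp p x * (KT p x)⁻¹ := by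
          have h1 := state_pow_succ_letter hp x
          rw [hjeq] at h1
          have h2 : state (p ^ orbitCard p ([orbRep p x] : Vertex d)) [orbRep p x]
              = Kp p x := rfl
          rw [h2] at h1
          rw [h1]
          group
        rw [hsplit, Kfun_cons ha hb hG x' ((state p [x]) w), Kfun_cons ha hb hG x w,
          hKp', hKq', hKT', hKA', hKS']
        have harg : ((1 : Equiv.Perm (Vertex d))⁻¹) ((state p [x]) w)
            = (Kp p x) ((KT p x)⁻¹ w) := by
          rw [hstatepx]
          simp [Equiv.Perm.mul_apply]
        rw [harg]
        have hIH := ih w.length (by omega) _ _ hG' ((KT p x)⁻¹ w)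
          ((KT_inv_treeAut hp x).len w)
        rw [Equiv.Perm.one_apply, hIH, hq.apply_append]
        have hqKA : q (KA p q x) = [KY p q x] := by
          rw [KA, ← Equiv.Perm.mul_apply, ← pow_succ', hjeq, hqm]
        have hqKS : state q (KA p q x) * KS p q x = Kq p q x := by
          rw [KA, KS, ← hq.state_mul (hq.pow (stepJ p x)), ← pow_succ', hjeq, Kq]
        rw [hqKA]
        congr 1
        rw [← hqKS]
        rfl

end KConj
section KBij
variable {d : ℕ} {a b : Equiv.Perm (Vertex d)}

theorem orbit_rel_of_pow_eq {q : Equiv.Perm (Vertex d)} (hq : IsTreeAut q) {y y' : Fin d}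
    {i k : ℕ} (h : (q ^ i) ([y] : Vertex d) = (q ^ k) [y']) :
    ∃ n : ℕ, (q ^ n) ([y] : Vertex d) = [y'] := by
  rcases le_total k i with hle | hle
  · refine ⟨i - k, ?_⟩
    apply (q ^ k).injective
    rw [← Equiv.Perm.mul_apply, ← pow_add, show k + (i - k) = i by omega, h]
  · have hki : (q ^ (k - i)) ([y'] : Vertex d) = [y] := by
      apply (q ^ i).injective
      rw [← Equiv.Perm.mul_apply, ← pow_add, show i + (k - i) = k by omega, ← h]
    exact rel_symm hq ⟨k - i, hki⟩

theorem KA_inj (ha : IsTreeAut a) (hb : IsTreeAut b) {p q : Equiv.Perm (Vertex d)}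
    (hG : Good a b p q) {x x' : Fin d} (h : KA p q x = KA p q x') : x = x' := by
  have hp : IsTreeAut p := hG.treeAut_left ha
  have hq : IsTreeAut q := hG.treeAut_right hb
  obtain ⟨hcj, hcc⟩ := conjc_spec hG.2.2
  obtain ⟨-, horb, hletter, -⟩ := good_step ha hb hG x
  obtain ⟨-, horb', hletter', -⟩ := good_step ha hb hG x'
  rw [KA, KA] at h
  obtain ⟨n, hn⟩ := orbit_rel_of_pow_eq hq h
  have htrans : (p ^ n) ([orbRep p x] : Vertex d) = [orbRep p x'] := by
    apply (conjc p q).injective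
    rw [← conj_pow_apply hcc, hletter, hn, hletter']
  have hx0 : orbRep p x' = orbRep p x := by
    have hmem : orbRep p x ∈ relSet p (orbRep p x') := mem_relSet.2 ⟨n, htrans⟩
    have h1 : orbRep p (orbRep p x) = orbRep p (orbRep p x') := orbRep_eq hp hmem
    rw [orbRep_idem hp x, orbRep_idem hp x'] at h1
    exact h1.symm
  have hKY : KY p q x' = KY p q x := by rw [KY, KY, hx0]
  have hj : stepJ p x = stepJ p x' := by
    apply pow_inj_orbit hq (y := ([KY p q x] : Vertex d))
    · rw [horb]; exact stepJ_lt hp x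
    · rw [horb, ← hx0]; exact stepJ_lt hp x'
    · rw [h, hKY]
  have hfin : ([x] : Vertex d) = [x'] := by
    rw [← pow_stepJ p x, ← pow_stepJ p x', hx0, hj]
  exact List.head_eq_of_cons_eq hfin

theorem Kfun_inj (ha : IsTreeAut a) (hb : IsTreeAut b) :
    ∀ n (p q : Equiv.Perm (Vertex d)), Good a b p q → ∀ v v' : Vertex d,
      v.length = n → v'.length = n → Kfun p q v = Kfun p q v' → v = v' := by
  intro n
  induction n using Nat.strong_induction_on with
  | _ n ih =>
    intro p q hG v v' hv hv' heq
    have hp : IsTreeAut p := hG.treeAut_left ha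
    have hq : IsTreeAut q := hG.treeAut_right hb
    cases v with
    | nil =>
      cases v' with
      | nil => rfl
      | cons x' w' => simp at hv hv'; omega
    | cons x w =>
      cases v' with
      | nil => simp at hv hv'; omega
      | cons x' w' =>
        have hG' := (good_step ha hb hG x).1
        rw [Kfun_cons ha hb hG, Kfun_cons ha hb hG] at heq
        have hlen : (KA p q x).length = (KA p q x').length := by
          rw [KA_length hq, KA_length hq]
        obtain ⟨hKAeq, htl⟩ := List.append_inj heq hlen
        have hx : x = x' := KA_inj ha hb hG hKAeq
        subst hx
        have hZ := (KS p q x).injective htl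
        have hw : (KT p x)⁻¹ w = (KT p x)⁻¹ w' := by
          apply ih (n - 1) (by simp at hv; omega) _ _ hG'
          · rw [(KT_inv_treeAut hp x).len]; simp at hv; omega
          · rw [(KT_inv_treeAut hp x).len]; simp at hv'; omega
          · exact hZ
        have := ((KT p x)⁻¹).injective hw
        rw [this]

theorem Kfun_surj (ha : IsTreeAut a) (hb : IsTreeAut b) :
    ∀ n (p q : Equiv.Perm (Vertex d)), Good a b p q → ∀ u : Vertex d, u.length = n →
      ∃ v : Vertex d, v.length = n ∧ Kfun p q v = u := by
  intro n
  induction n using Nat.strong_induction_on with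
  | _ n ih =>
    intro p q hG u hu
    have hp : IsTreeAut p := hG.treeAut_left ha
    have hq : IsTreeAut q := hG.treeAut_right hb
    obtain ⟨hcj, hcc⟩ := conjc_spec hG.2.2
    cases u with
    | nil => exact ⟨[], by simpa using hu, rfl⟩
    | cons y u' =>
      have hinv : IsTreeAut (conjc p q)⁻¹ := (treeAut d).inv_mem hcj
      have hz : (conjc p q)⁻¹ [y] = [((conjc p q)⁻¹ [y]).headD y] := hinv.letter y
      set z0 := ((conjc p q)⁻¹ [y]).headD y with hz0def
      obtain ⟨k, hk⟩ := orbRep_exists p z0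
      obtain ⟨hG', horb, hletter, -⟩ := good_step ha hb hG z0
      have hqk : (q ^ k) ([KY p q z0] : Vertex d) = [y] := by
        rw [← hletter, conj_pow_apply hcc, hk, ← hz, Equiv.Perm.apply_inv_self]
      have hmpos : 0 < orbitCard p ([orbRep p z0] : Vertex d) := hp.orbitCard_pos _
      set m := orbitCard p ([orbRep p z0] : Vertex d) with hmdef
      have hjq : (q ^ (k % m)) ([KY p q z0] : Vertex d) = [y] := by
        conv_rhs => rw [← hqk]
        conv_rhs => rw [show k = k % m + m * (k / m) from by rw [Nat.add_comm, Nat.div_add_mod]]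
        rw [pow_add, Equiv.Perm.mul_apply]
        have hfixq : (q ^ (m * (k / m))) ([KY p q z0] : Vertex d) = [KY p q z0] := by
          apply (hq.pow_fix_iff_orbitCard _ _).2
          rw [horb]
          exact ⟨k / m, rfl⟩
        rw [hfixq]
      have hjqlt : k % m < m := Nat.mod_lt k hmpos
      have hxl : (p ^ (k % m)) ([orbRep p z0] : Vertex d)
          = [((p ^ (k % m)) ([orbRep p z0] : Vertex d)).headD z0] := by
        have h1 : ((p ^ (k % m)) ([orbRep p z0] : Vertex d)).length = 1 := by
          rw [(hp.pow _).len]; rfl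
        obtain ⟨c, hc⟩ := List.length_eq_one_iff.1 h1
        rw [hc]; rfl
      set x := ((p ^ (k % m)) ([orbRep p z0] : Vertex d)).headD z0 with hxdef
      have hrepx : orbRep p x = orbRep p z0 := by
        have hmem : orbRep p z0 ∈ relSet p x := mem_relSet.2 ⟨k % m, hxl⟩
        have h1 := orbRep_eq hp hmem
        rw [orbRep_idem hp z0] at h1
        exact h1.symm
      have hstep : stepJ p x = k % m := by
        apply stepJ_eq hp
        · rw [hrepx]; exact hjqlt
        · rw [hrepx]; exact hxl
      have hKYx : KY p q x = KY p q z0 := by rw [KY, KY, hrepx]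
      have hKpx : Kp p x = Kp p z0 := by rw [Kp, Kp, hrepx]
      have hKqx : Kq p q x = Kq p q z0 := by rw [Kq, Kq, hrepx, hKYx]
      have hKA : KA p q x = [y] := by rw [KA, hstep, hKYx, hjq]
      have hu' : u'.length = n - 1 := by simp at hu; omega
      obtain ⟨w1, hw1len, hw1⟩ := ih (n - 1) (by simp at hu; omega) _ _ hG'
        ((KS p q x)⁻¹ u') (by rw [((treeAut d).inv_mem (KS_treeAut hq p x)).len]; exact hu')
      refine ⟨x :: (KT p x) w1, ?_, ?_⟩
      · simp only [List.length_cons, (KT_treeAut hp x).len, hw1len]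
        simp at hu; omega
      · rw [Kfun_cons ha hb hG, Equiv.Perm.inv_apply_self, hKA, hKpx, hKqx, hw1,
          Equiv.Perm.apply_inv_self]
        rfl

theorem Kfun_prefix (ha : IsTreeAut a) (hb : IsTreeAut b) :
    ∀ n (p q : Equiv.Perm (Vertex d)), Good a b p q → ∀ v w : Vertex d, v.length = n →
      Kfun p q v <+: Kfun p q (v ++ w) := by
  intro n
  induction n using Nat.strong_induction_on with
  | _ n ih =>
    intro p q hG v w hv
    have hp : IsTreeAut p := hG.treeAut_left ha
    have hq : IsTreeAut q := hG.treeAut_right hb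
    cases v with
    | nil => exact List.nil_prefix
    | cons x v' =>
      have hG' := (good_step ha hb hG x).1
      have hcons : ((x :: v') ++ w : Vertex d) = x :: (v' ++ w) := rfl
      rw [hcons, Kfun_cons ha hb hG, Kfun_cons ha hb hG]
      have happ : (KT p x)⁻¹ (v' ++ w)
          = (KT p x)⁻¹ v' ++ state ((KT p x)⁻¹) v' w := (KT_inv_treeAut hp x).apply_append v' w
      rw [happ]
      have hpre : Kfun (Kp p x) (Kq p q x) ((KT p x)⁻¹ v')
          <+: Kfun (Kp p x) (Kq p q x) ((KT p x)⁻¹ v' ++ state ((KT p x)⁻¹) v' w) := by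
        apply ih (n - 1) (by simp at hv; omega) _ _ hG'
        rw [(KT_inv_treeAut hp x).len]; simp at hv; omega
      have := (KS_treeAut hq p x).prefix_mono hpre
      obtain ⟨t, ht⟩ := this
      exact ⟨t, by rw [List.append_assoc, ht]⟩

end KBij
noncomputable section KPermSec
open scoped Classical
variable {d : ℕ} {a b : Equiv.Perm (Vertex d)}

/-- The recursively defined conjugator, as a permutation of the vertex set. -/
def KPerm (p q : Equiv.Perm (Vertex d)) : Equiv.Perm (Vertex d) :=
  if h : Function.Bijective (Kfun p q) then Equiv.ofBijective _ h else 1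

theorem Kfun_bijective (ha : IsTreeAut a) (hb : IsTreeAut b) {p q : Equiv.Perm (Vertex d)}
    (hG : Good a b p q) : Function.Bijective (Kfun p q) := by
  constructor
  · intro v v' h
    have hl : v.length = v'.length := by
      rw [← Kfun_length ha hb v.length p q hG v rfl, h,
        Kfun_length ha hb v'.length p q hG v' rfl]
    exact Kfun_inj ha hb v.length p q hG v v' rfl hl.symm h
  · intro u
    obtain ⟨v, -, hv⟩ := Kfun_surj ha hb u.length p q hG u rfl
    exact ⟨v, hv⟩

theorem KPerm_coe (ha : IsTreeAut a) (hb : IsTreeAut b) {p q : Equiv.Perm (Vertex d)}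
    (hG : Good a b p q) : ⇑(KPerm p q) = Kfun p q := by
  rw [KPerm, dif_pos (Kfun_bijective ha hb hG)]
  rfl

theorem KPerm_treeAut (ha : IsTreeAut a) (hb : IsTreeAut b) {p q : Equiv.Perm (Vertex d)}
    (hG : Good a b p q) : IsTreeAut (KPerm p q) := by
  constructor
  · intro v
    rw [KPerm_coe ha hb hG]
    exact Kfun_length ha hb v.length p q hG v rfl
  · intro v w
    rw [KPerm_coe ha hb hG]
    exact Kfun_prefix ha hb v.length p q hG v w rfl

theorem KPerm_state (ha : IsTreeAut a) (hb : IsTreeAut b) {p q : Equiv.Perm (Vertex d)}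
    (hG : Good a b p q) (x : Fin d) :
    state (KPerm p q) [x] = KS p q x * KPerm (Kp p x) (Kq p q x) * (KT p x)⁻¹ := by
  have hp : IsTreeAut p := hG.treeAut_left ha
  have hq : IsTreeAut q := hG.treeAut_right hb
  have hG' := (good_step ha hb hG x).1
  have hKT := KPerm_treeAut ha hb hG
  ext w
  rw [hKT.state_apply]
  have h1 : ([x] : Vertex d) ++ w = x :: w := rfl
  rw [h1, KPerm_coe ha hb hG, Kfun_cons ha hb hG]
  have h2 : (([x] : Vertex d)).length = (KA p q x).length := by rw [KA_length hq]; rfl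
  rw [h2, List.drop_left]
  simp only [Equiv.Perm.mul_apply]
  rw [KPerm_coe ha hb hG']

theorem KPerm_conj (ha : IsTreeAut a) (hb : IsTreeAut b) {p q : Equiv.Perm (Vertex d)}
    (hG : Good a b p q) : KPerm p q * p * (KPerm p q)⁻¹ = q := by
  ext v : 1
  simp only [Equiv.Perm.mul_apply]
  have h1 : KPerm p q (p ((KPerm p q)⁻¹ v)) = q (KPerm p q ((KPerm p q)⁻¹ v)) := by
    have := Kfun_conj ha hb ((KPerm p q)⁻¹ v).length p q hG ((KPerm p q)⁻¹ v) rfl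
    rw [← KPerm_coe ha hb hG] at this
    exact this
  rw [h1, Equiv.Perm.apply_inv_self]

end KPermSec
section Assembly
variable {d : ℕ}

theorem selfSimilar_closure {S : Set (Equiv.Perm (Vertex d))}
    (hS : S ⊆ (treeAut d : Set (Equiv.Perm (Vertex d))))
    (hstep : ∀ s ∈ S, ∀ x : Fin d, state s [x] ∈ Subgroup.closure S) :
    SelfSimilar (Subgroup.closure S) := by
  have hle : Subgroup.closure S ≤ treeAut d := (Subgroup.closure_le _).2 hS
  have main : ∀ n : ℕ, ∀ g ∈ Subgroup.closure S, ∀ v : Vertex d, v.length = n →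
      state g v ∈ Subgroup.closure S := by
    intro n
    induction n using Nat.strong_induction_on with
    | _ n ihn =>
      cases n with
      | zero =>
        intro g hg v hv
        have hnil : v = [] := List.length_eq_zero_iff.1 hv
        subst hnil
        rw [(show IsTreeAut g from hle hg).state_nil]
        exact hg
      | succ m =>
        intro g hg
        induction hg using Subgroup.closure_induction with
        | mem s hs =>
          intro v hv
          cases v with
          | nil => simp at hv
          | cons x w =>
            have hwlen : w.length = m := by simpa using hv
            have hsT : IsTreeAut s := hS hs
            have h1 : (x :: w : Vertex d) = [x] ++ w := rfl
            rw [h1, hsT.state_append]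
            exact ihn m (by omega) _ (hstep s hs x) w hwlen
        | one =>
          intro v hv
          rw [state_one]
          exact Subgroup.one_mem _
        | mul g h hgmem hhmem ihg ihh =>
          intro v hv
          have hgT : IsTreeAut g := hle hgmem
          have hhT : IsTreeAut h := hle hhmem
          rw [hgT.state_mul hhT]
          exact Subgroup.mul_mem _ (ihg (h v) (by rw [hhT.len]; exact hv)) (ihh v hv)
        | inv g hgmem ihg =>
          intro v hv
          have hgT : IsTreeAut g := hle hgmem
          rw [hgT.state_inv]
          exact Subgroup.inv_mem _
            (ihg (g⁻¹ v) (by rw [((treeAut d).inv_mem hgT).len]; exact hv))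
  exact fun g hg v => main v.length g hg v rfl

theorem state_pow_mem_closure {g : Equiv.Perm (Vertex d)} (hg : IsTreeAut g) (k : ℕ)
    (v : Vertex d) :
    state (g ^ k) v ∈ Subgroup.closure (Set.range fun u : Vertex d => state g u) := by
  induction k with
  | zero => rw [pow_zero, state_one]; exact one_mem _
  | succ n ihn =>
    rw [pow_succ', hg.state_mul (hg.pow n)]
    exact mul_mem (Subgroup.subset_closure ⟨(g ^ n) v, rfl⟩) ihn

theorem os_state_pow_mem {g q : Equiv.Perm (Vertex d)} (hg : IsTreeAut g) {u : Vertex d}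
    (hq : q = state (g ^ orbitCard g u) u) (j : ℕ) (y : Vertex d) :
    state (q ^ j) y ∈ Subgroup.closure (Set.range fun v : Vertex d => state g v) := by
  subst hq
  rw [← (hg.pow _).state_pow (hg.pow_orbitCard_fix u) j, ← pow_mul,
    ← (hg.pow _).state_append]
  exact state_pow_mem_closure hg _ _

theorem orbitCard_nil {g : Equiv.Perm (Vertex d)} (hg : IsTreeAut g) :
    orbitCard g ([] : Vertex d) = 1 := by
  have hconst : ∀ n : ℤ, (g ^ n) ([] : Vertex d) = [] := fun n =>
    List.length_eq_zero_iff.1 ((show IsTreeAut (g ^ n) from (treeAut d).zpow_mem hg n).len [])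
  have hr : (Set.range fun n : ℤ => (g ^ n) ([] : Vertex d)) = {([] : Vertex d)} := by
    ext u
    simp only [Set.mem_range, Set.mem_singleton_iff]
    constructor
    · rintro ⟨n, rfl⟩; exact hconst n
    · rintro rfl; exact ⟨0, hconst 0⟩
  rw [orbitCard, hr]
  simp

end Assembly
/-- Two finite-state automorphisms `a, b` of the regular rooted
`d`-ary tree with finite orbit-signalizers are conjugate in `Aut(T)` if and only
if they are conjugate in the group `FR(X)` of functionally recursive
automorphisms. -/
theorem conj_in_AutT_iff_conj_in_FR
    (d : ℕ) (hd : 2 ≤ d) (a b : Equiv.Perm (Vertex d))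
    (ha : IsTreeAut a) (hb : IsTreeAut b)
    (hfa : FiniteState a) (hfb : FiniteState b)
    (hoa : FiniteOS a) (hob : FiniteOS b) :
    (∃ h : Equiv.Perm (Vertex d), IsTreeAut h ∧ h * a * h⁻¹ = b) ↔
      (∃ h : Equiv.Perm (Vertex d), FunctionallyRecursive h ∧ h * a * h⁻¹ = b) := by
  constructor
  · rintro ⟨h, hT, hc⟩
    have hGood : Good a b a b := by
      refine ⟨⟨[], ?_⟩, ⟨[], ?_⟩, ⟨h, hT, hc⟩⟩
      · rw [orbitCard_nil ha, pow_one, ha.state_nil]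
      · rw [orbitCard_nil hb, pow_one, hb.state_nil]
    set SA := (Set.range fun v : Vertex d => state a v) with hSA
    set SB := (Set.range fun v : Vertex d => state b v) with hSB
    set GS := {pq : Equiv.Perm (Vertex d) × Equiv.Perm (Vertex d) | Good a b pq.1 pq.2}
      with hGS
    set SK := (fun pq : Equiv.Perm (Vertex d) × Equiv.Perm (Vertex d) =>
      KPerm pq.1 pq.2) '' GS with hSK
    set S := SA ∪ SB ∪ SK with hS
    have hGSsub : GS ⊆ (OS a) ×ˢ (OS b) := by
      rintro ⟨p, q⟩ hpq
      obtain ⟨⟨v, hv⟩, ⟨u, hu⟩, -⟩ := hpq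
      exact ⟨⟨v, hv⟩, ⟨u, hu⟩⟩
    have hSfin : S.Finite :=
      Set.Finite.union (Set.Finite.union hfa hfb)
        (Set.Finite.image _ (Set.Finite.subset (hoa.prod hob) hGSsub))
    have hStree : S ⊆ (treeAut d : Set (Equiv.Perm (Vertex d))) := by
      rintro s ((hs | hs) | hs)
      · obtain ⟨v, rfl⟩ := hs; exact ha.state_isTreeAut v
      · obtain ⟨v, rfl⟩ := hs; exact hb.state_isTreeAut v
      · obtain ⟨⟨p, q⟩, hpq, rfl⟩ := hs; exact KPerm_treeAut ha hb hpq
    have hsub1 : Subgroup.closure SA ≤ Subgroup.closure S :=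
      Subgroup.closure_mono fun x hx => Or.inl (Or.inl hx)
    have hsub2 : Subgroup.closure SB ≤ Subgroup.closure S :=
      Subgroup.closure_mono fun x hx => Or.inl (Or.inr hx)
    have hstep : ∀ s ∈ S, ∀ x : Fin d, state s [x] ∈ Subgroup.closure S := by
      rintro s ((hs | hs) | hs) x
      · obtain ⟨v, rfl⟩ := hs
        rw [← ha.state_append]
        exact Subgroup.subset_closure (Or.inl (Or.inl ⟨v ++ [x], rfl⟩))
      · obtain ⟨v, rfl⟩ := hs
        rw [← hb.state_append]
        exact Subgroup.subset_closure (Or.inl (Or.inr ⟨v ++ [x], rfl⟩))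
      · obtain ⟨⟨p, q⟩, hpq, rfl⟩ := hs
        rw [KPerm_state ha hb hpq x]
        have h1 : KS p q x ∈ Subgroup.closure S := by
          obtain ⟨u, hu⟩ := hpq.2.1
          exact hsub2 (os_state_pow_mem hb hu _ _)
        have h2 : KPerm (Kp p x) (Kq p q x) ∈ Subgroup.closure S :=
          Subgroup.subset_closure
            (Or.inr ⟨(Kp p x, Kq p q x), (good_step ha hb hpq x).1, rfl⟩)
        have h3 : (KT p x)⁻¹ ∈ Subgroup.closure S := by
          apply Subgroup.inv_mem
          obtain ⟨v, hv⟩ := hpq.1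
          exact hsub1 (os_state_pow_mem ha hv _ _)
        exact mul_mem (mul_mem h1 h2) h3
    exact ⟨KPerm a b, ⟨Subgroup.closure S, (Subgroup.closure_le _).2 hStree,
      selfSimilar_closure hStree hstep, ⟨S, hSfin, rfl⟩,
      Subgroup.subset_closure (Or.inr ⟨(a, b), hGood, rfl⟩)⟩, KPerm_conj ha hb hGood⟩
  · rintro ⟨h, ⟨G, hGle, -, -, hmem⟩, hc⟩
    exact ⟨h, hGle hmem, hc⟩
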